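/- Let F ⊂ [0,1]² be the self-affine set which is the attractor of the four affine maps sending the unit square to the four rectangles of width 1/4 and height 1/2 pictured in the iteration scheme (two rectangles in each of two columns, one column per half of the square, such that the horizontal projection of F is all of [0,1]). Then: (1) the natural uniformly distributed measure μ on F satisfies μ(Q) ≤ C·diam(Q)^{3/2} for all squares Q ⊂ ℝ², hence H^{3/2}(F) > 0; (2) the projection of F onto the x-axis is the interval [0,1]; (3) every vertical line meets F in at most two points, so every vertical slice of F has Hausdorff dimension 0. -/

import Mathlib

open Set MeasureTheory
open scoped ENNReal NNReal

/-- The four affine maps of the self-affine example: `f_i(x,y) = (x/4 + a_i, y/2 + b_i)`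
with translations `(0,0), (1/4,1/2), (1/2,0), (3/4,1/2)`. -/
noncomputable def selfAffineMap (i : Fin 4) : ℝ × ℝ → ℝ × ℝ :=
  fun p => (p.1 / 4 + ![(0 : ℝ), 1/4, 1/2, 3/4] i, p.2 / 2 + ![(0 : ℝ), 1/2, 0, 1/2] i)

set_option linter.unusedSectionVars false
set_option linter.unnecessarySeqFocus false
namespace SelfAffineAux
noncomputable def A : Fin 4 → ℝ := ![0, 1/4, 1/2, 3/4]
noncomputable def B : Fin 4 → ℝ := ![0, 1/2, 0, 1/2]
lemma A0 : A 0 = 0 := rfl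
lemma A1 : A 1 = 1/4 := rfl
lemma A2 : A 2 = 1/2 := rfl
lemma A3 : A 3 = 3/4 := rfl
lemma B0 : B 0 = 0 := rfl
lemma B1 : B 1 = 1/2 := rfl
lemma B2 : B 2 = 0 := rfl
lemma B3 : B 3 = 1/2 := rfl
lemma sa_meas (i : Fin 4) : Measurable (selfAffineMap i) := by
  unfold selfAffineMap; fun_prop
lemma pre_prod (i : Fin 4) (s t : Set ℝ) :
    selfAffineMap i ⁻¹' (s ×ˢ t) =
      ((fun x : ℝ => x / 4 + A i) ⁻¹' s) ×ˢ ((fun y : ℝ => y / 2 + B i) ⁻¹' t) := rfl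
lemma pre_Icc4 (a u v : ℝ) :
    (fun x : ℝ => x / 4 + a) ⁻¹' Icc u v = Icc (4 * (u - a)) (4 * (v - a)) := by
  ext x; simp only [mem_preimage, mem_Icc]; constructor <;> intro h <;> constructor <;> linarith [h.1, h.2]
lemma pre_Icc2 (b u v : ℝ) :
    (fun y : ℝ => y / 2 + b) ⁻¹' Icc u v = Icc (2 * (u - b)) (2 * (v - b)) := by
  ext x; simp only [mem_preimage, mem_Icc]; constructor <;> intro h <;> constructor <;> linarith [h.1, h.2]
lemma muApply {μ : Measure (ℝ × ℝ)} (hμself : μ = (4 : ℝ≥0∞)⁻¹ • ∑ i : Fin 4, Measure.map (selfAffineMap i) μ)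
    {S : Set (ℝ × ℝ)} (hS : MeasurableSet S) :
    μ S = 4⁻¹ * ∑ i : Fin 4, μ (selfAffineMap i ⁻¹' S) := by
  conv_lhs => rw [hμself]
  rw [Measure.smul_apply, Measure.finset_sum_apply, smul_eq_mul]
  congr 1
  exact Finset.sum_congr rfl fun i _ => Measure.map_apply (sa_meas i) hS
lemma pre_rect_0 (u v w x : ℝ) :
    selfAffineMap 0 ⁻¹' (Icc u v ×ˢ Icc w x) =
      Icc (4*u - 0) (4*v - 0) ×ˢ Icc (2*w - 0) (2*x - 0) := by
  ext z
  simp only [mem_preimage, selfAffineMap, mem_prod, mem_Icc, Matrix.cons_val_zero,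
    Matrix.cons_val_one, Matrix.head_cons, Matrix.cons_val_two, Matrix.tail_cons,
    Matrix.cons_val_three]
  constructor <;> rintro ⟨⟨h1, h2⟩, h3, h4⟩ <;>
    exact ⟨⟨by linarith, by linarith⟩, by linarith, by linarith⟩

lemma pre_strip_0 (w x : ℝ) :
    selfAffineMap 0 ⁻¹' ((univ : Set ℝ) ×ˢ Icc w x) =
      (univ : Set ℝ) ×ˢ Icc (2*w - 0) (2*x - 0) := by
  ext z
  simp only [mem_preimage, selfAffineMap, mem_prod, mem_Icc, mem_univ, true_and,
    Matrix.cons_val_zero, Matrix.cons_val_one, Matrix.head_cons, Matrix.cons_val_two,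
    Matrix.tail_cons, Matrix.cons_val_three]
  constructor <;> rintro ⟨h1, h2⟩ <;> exact ⟨by linarith, by linarith⟩

lemma pre_col_0 (u v : ℝ) :
    selfAffineMap 0 ⁻¹' (Icc u v ×ˢ (univ : Set ℝ)) =
      Icc (4*u - 0) (4*v - 0) ×ˢ (univ : Set ℝ) := by
  ext z
  simp only [mem_preimage, selfAffineMap, mem_prod, mem_Icc, mem_univ, and_true,
    Matrix.cons_val_zero, Matrix.cons_val_one, Matrix.head_cons, Matrix.cons_val_two,
    Matrix.tail_cons, Matrix.cons_val_three]
  constructor <;> rintro ⟨h1, h2⟩ <;> exact ⟨by linarith, by linarith⟩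

lemma pre_rect_1 (u v w x : ℝ) :
    selfAffineMap 1 ⁻¹' (Icc u v ×ˢ Icc w x) =
      Icc (4*u - 1) (4*v - 1) ×ˢ Icc (2*w - 1) (2*x - 1) := by
  ext z
  simp only [mem_preimage, selfAffineMap, mem_prod, mem_Icc, Matrix.cons_val_zero,
    Matrix.cons_val_one, Matrix.head_cons, Matrix.cons_val_two, Matrix.tail_cons,
    Matrix.cons_val_three]
  constructor <;> rintro ⟨⟨h1, h2⟩, h3, h4⟩ <;>
    exact ⟨⟨by linarith, by linarith⟩, by linarith, by linarith⟩

lemma pre_strip_1 (w x : ℝ) :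
    selfAffineMap 1 ⁻¹' ((univ : Set ℝ) ×ˢ Icc w x) =
      (univ : Set ℝ) ×ˢ Icc (2*w - 1) (2*x - 1) := by
  ext z
  simp only [mem_preimage, selfAffineMap, mem_prod, mem_Icc, mem_univ, true_and,
    Matrix.cons_val_zero, Matrix.cons_val_one, Matrix.head_cons, Matrix.cons_val_two,
    Matrix.tail_cons, Matrix.cons_val_three]
  constructor <;> rintro ⟨h1, h2⟩ <;> exact ⟨by linarith, by linarith⟩

lemma pre_col_1 (u v : ℝ) :
    selfAffineMap 1 ⁻¹' (Icc u v ×ˢ (univ : Set ℝ)) =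
      Icc (4*u - 1) (4*v - 1) ×ˢ (univ : Set ℝ) := by
  ext z
  simp only [mem_preimage, selfAffineMap, mem_prod, mem_Icc, mem_univ, and_true,
    Matrix.cons_val_zero, Matrix.cons_val_one, Matrix.head_cons, Matrix.cons_val_two,
    Matrix.tail_cons, Matrix.cons_val_three]
  constructor <;> rintro ⟨h1, h2⟩ <;> exact ⟨by linarith, by linarith⟩

lemma pre_rect_2 (u v w x : ℝ) :
    selfAffineMap 2 ⁻¹' (Icc u v ×ˢ Icc w x) =
      Icc (4*u - 2) (4*v - 2) ×ˢ Icc (2*w - 0) (2*x - 0) := by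
  ext z
  simp only [mem_preimage, selfAffineMap, mem_prod, mem_Icc, Matrix.cons_val_zero,
    Matrix.cons_val_one, Matrix.head_cons, Matrix.cons_val_two, Matrix.tail_cons,
    Matrix.cons_val_three]
  constructor <;> rintro ⟨⟨h1, h2⟩, h3, h4⟩ <;>
    exact ⟨⟨by linarith, by linarith⟩, by linarith, by linarith⟩

lemma pre_strip_2 (w x : ℝ) :
    selfAffineMap 2 ⁻¹' ((univ : Set ℝ) ×ˢ Icc w x) =
      (univ : Set ℝ) ×ˢ Icc (2*w - 0) (2*x - 0) := by
  ext z
  simp only [mem_preimage, selfAffineMap, mem_prod, mem_Icc, mem_univ, true_and,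
    Matrix.cons_val_zero, Matrix.cons_val_one, Matrix.head_cons, Matrix.cons_val_two,
    Matrix.tail_cons, Matrix.cons_val_three]
  constructor <;> rintro ⟨h1, h2⟩ <;> exact ⟨by linarith, by linarith⟩

lemma pre_col_2 (u v : ℝ) :
    selfAffineMap 2 ⁻¹' (Icc u v ×ˢ (univ : Set ℝ)) =
      Icc (4*u - 2) (4*v - 2) ×ˢ (univ : Set ℝ) := by
  ext z
  simp only [mem_preimage, selfAffineMap, mem_prod, mem_Icc, mem_univ, and_true,
    Matrix.cons_val_zero, Matrix.cons_val_one, Matrix.head_cons, Matrix.cons_val_two,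
    Matrix.tail_cons, Matrix.cons_val_three]
  constructor <;> rintro ⟨h1, h2⟩ <;> exact ⟨by linarith, by linarith⟩

lemma pre_rect_3 (u v w x : ℝ) :
    selfAffineMap 3 ⁻¹' (Icc u v ×ˢ Icc w x) =
      Icc (4*u - 3) (4*v - 3) ×ˢ Icc (2*w - 1) (2*x - 1) := by
  ext z
  simp only [mem_preimage, selfAffineMap, mem_prod, mem_Icc, Matrix.cons_val_zero,
    Matrix.cons_val_one, Matrix.head_cons, Matrix.cons_val_two, Matrix.tail_cons,
    Matrix.cons_val_three]
  constructor <;> rintro ⟨⟨h1, h2⟩, h3, h4⟩ <;>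
    exact ⟨⟨by linarith, by linarith⟩, by linarith, by linarith⟩

lemma pre_strip_3 (w x : ℝ) :
    selfAffineMap 3 ⁻¹' ((univ : Set ℝ) ×ˢ Icc w x) =
      (univ : Set ℝ) ×ˢ Icc (2*w - 1) (2*x - 1) := by
  ext z
  simp only [mem_preimage, selfAffineMap, mem_prod, mem_Icc, mem_univ, true_and,
    Matrix.cons_val_zero, Matrix.cons_val_one, Matrix.head_cons, Matrix.cons_val_two,
    Matrix.tail_cons, Matrix.cons_val_three]
  constructor <;> rintro ⟨h1, h2⟩ <;> exact ⟨by linarith, by linarith⟩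

lemma pre_col_3 (u v : ℝ) :
    selfAffineMap 3 ⁻¹' (Icc u v ×ˢ (univ : Set ℝ)) =
      Icc (4*u - 3) (4*v - 3) ×ˢ (univ : Set ℝ) := by
  ext z
  simp only [mem_preimage, selfAffineMap, mem_prod, mem_Icc, mem_univ, and_true,
    Matrix.cons_val_zero, Matrix.cons_val_one, Matrix.head_cons, Matrix.cons_val_two,
    Matrix.tail_cons, Matrix.cons_val_three]
  constructor <;> rintro ⟨h1, h2⟩ <;> exact ⟨by linarith, by linarith⟩

lemma two_inv_cancel : (2:ℝ≥0∞) * 2⁻¹ = 1 :=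
  ENNReal.mul_inv_cancel two_ne_zero ENNReal.ofNat_ne_top

lemma q42 : (4:ℝ≥0∞)⁻¹ * 2 = 2⁻¹ := by
  rw [show (4:ℝ≥0∞) = 2*2 by norm_num,
    ENNReal.mul_inv (Or.inl two_ne_zero) (Or.inl ENNReal.ofNat_ne_top), mul_assoc,
    ENNReal.inv_mul_cancel two_ne_zero ENNReal.ofNat_ne_top, mul_one]

lemma q2 (a : ℝ≥0∞) : (4:ℝ≥0∞)⁻¹ * (2 * a) = 2⁻¹ * a := by rw [← mul_assoc, q42]

lemma q4 (a : ℝ≥0∞) : (4:ℝ≥0∞)⁻¹ * (4 * a) = a := by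
  rw [← mul_assoc, ENNReal.inv_mul_cancel (by norm_num) (by norm_num), one_mul]



variable {μ : Measure (ℝ × ℝ)} {F : Set (ℝ × ℝ)}
lemma mu_le_box (hμF : μ Fᶜ = 0) (hFsub : F ⊆ Icc 0 1 ×ˢ Icc 0 1)
    {S T : Set (ℝ × ℝ)} (h : S ∩ (Icc 0 1 ×ˢ Icc 0 1) ⊆ T) : μ S ≤ μ T := by
  calc μ S ≤ μ ((S ∩ (Icc 0 1 ×ˢ Icc 0 1)) ∪ (Icc 0 1 ×ˢ Icc 0 1 : Set (ℝ × ℝ))ᶜ) := by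
        apply measure_mono; intro z hz
        by_cases hb : z ∈ (Icc 0 1 ×ˢ Icc 0 1 : Set (ℝ × ℝ))
        · exact Or.inl ⟨hz, hb⟩
        · exact Or.inr hb
    _ ≤ μ (S ∩ (Icc 0 1 ×ˢ Icc 0 1)) + μ (Icc 0 1 ×ˢ Icc 0 1 : Set (ℝ × ℝ))ᶜ :=
        measure_union_le _ _
    _ = μ (S ∩ (Icc 0 1 ×ˢ Icc 0 1)) := by
        rw [measure_mono_null (compl_subset_compl.2 hFsub) hμF, add_zero]
    _ ≤ μ T := measure_mono h
lemma ennreal_half {a : ℝ≥0∞} (ha : a ≠ ⊤) (h : a ≤ 2⁻¹ * a) : a = 0 := by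
  by_contra h0
  have : (2⁻¹ : ℝ≥0∞) * a < 1 * a := by
    exact ENNReal.mul_lt_mul_left h0 ha (by norm_num)
  rw [one_mul] at this
  exact absurd h (not_le.2 this)
lemma mu_zero_box_disj (hμF : μ Fᶜ = 0) (hFsub : F ⊆ Icc 0 1 ×ˢ Icc 0 1)
    {S : Set (ℝ × ℝ)} (h : S ∩ (Icc 0 1 ×ˢ Icc 0 1) ⊆ (∅ : Set (ℝ × ℝ))) : μ S = 0 :=
  le_antisymm ((mu_le_box hμF hFsub h).trans_eq measure_empty) (zero_le)

section lines
variable [IsProbabilityMeasure μ] (hμF : μ Fᶜ = 0) (hFsub : F ⊆ Icc 0 1 ×ˢ Icc 0 1)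
include hμF hFsub

lemma col_out_lt {a b : ℝ} (h : b < 0) : μ (Icc a b ×ˢ (univ : Set ℝ)) = 0 := by
  apply mu_zero_box_disj hμF hFsub
  rintro z ⟨⟨⟨-, h2⟩, -⟩, ⟨h3, -⟩, -⟩
  exact absurd (h3.trans h2) (not_le.2 h)

lemma col_out_gt {a b : ℝ} (h : 1 < a) : μ (Icc a b ×ˢ (univ : Set ℝ)) = 0 := by
  apply mu_zero_box_disj hμF hFsub
  rintro z ⟨⟨⟨h1, -⟩, -⟩, ⟨-, h4⟩, -⟩
  exact absurd ((h.trans_le h1).trans_le h4) (lt_irrefl 1)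

lemma row_out_lt {a b : ℝ} (h : b < 0) : μ ((univ : Set ℝ) ×ˢ Icc a b) = 0 := by
  apply mu_zero_box_disj hμF hFsub
  rintro z ⟨⟨-, -, h2⟩, -, h3, -⟩
  exact absurd (h3.trans h2) (not_le.2 h)

lemma row_out_gt {a b : ℝ} (h : 1 < a) : μ ((univ : Set ℝ) ×ˢ Icc a b) = 0 := by
  apply mu_zero_box_disj hμF hFsub
  rintro z ⟨⟨-, h1, -⟩, -, -, h4⟩
  exact absurd ((h.trans_le h1).trans_le h4) (lt_irrefl 1)

variable (hμself : μ = (4 : ℝ≥0∞)⁻¹ • ∑ i : Fin 4, Measure.map (selfAffineMap i) μ)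
include hμself

lemma vline0 : μ (Icc (0:ℝ) 0 ×ˢ (univ : Set ℝ)) = 0 := by
  have h := muApply hμself (measurableSet_Icc.prod MeasurableSet.univ :
    MeasurableSet (Icc (0:ℝ) 0 ×ˢ (univ : Set ℝ)))
  rw [Fin.sum_univ_four] at h
  simp only [pre_prod, pre_Icc4, Set.preimage_univ, A0, A1, A2, A3] at h
  rw [show (4*((0:ℝ)-0)) = 0 by norm_num] at h
  rw [col_out_lt hμF hFsub (show (4*((0:ℝ)-1/4)) < 0 by norm_num),
      col_out_lt hμF hFsub (show (4*((0:ℝ)-1/2)) < 0 by norm_num),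
      col_out_lt hμF hFsub (show (4*((0:ℝ)-3/4)) < 0 by norm_num)] at h
  refine ennreal_half (measure_ne_top μ _) ?_
  calc μ (Icc (0:ℝ) 0 ×ˢ (univ : Set ℝ)) = 4⁻¹ * (μ (Icc (0:ℝ) 0 ×ˢ (univ : Set ℝ)) + 0 + 0 + 0) := h
    _ ≤ 2⁻¹ * μ (Icc (0:ℝ) 0 ×ˢ (univ : Set ℝ)) := by
        rw [add_zero, add_zero, add_zero]
        gcongr <;> norm_num


lemma vline1 : μ (Icc (1:ℝ) 1 ×ˢ (univ : Set ℝ)) = 0 := by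
  have h := muApply hμself (measurableSet_Icc.prod MeasurableSet.univ :
    MeasurableSet (Icc (1:ℝ) 1 ×ˢ (univ : Set ℝ)))
  rw [Fin.sum_univ_four, pre_col_0, pre_col_1, pre_col_2, pre_col_3] at h
  rw [show (4*(1:ℝ) - 3) = 1 by norm_num] at h
  rw [col_out_gt hμF hFsub (show (1:ℝ) < 4*1 - 0 by norm_num),
      col_out_gt hμF hFsub (show (1:ℝ) < 4*1 - 1 by norm_num),
      col_out_gt hμF hFsub (show (1:ℝ) < 4*1 - 2 by norm_num)] at h
  refine ennreal_half (measure_ne_top μ _) ?_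
  calc μ (Icc (1:ℝ) 1 ×ˢ (univ : Set ℝ))
      = 4⁻¹ * (0 + 0 + 0 + μ (Icc (1:ℝ) 1 ×ˢ (univ : Set ℝ))) := h
    _ ≤ 2⁻¹ * μ (Icc (1:ℝ) 1 ×ˢ (univ : Set ℝ)) := by
        rw [zero_add, zero_add, zero_add]; gcongr <;> norm_num

lemma hline0 : μ ((univ : Set ℝ) ×ˢ Icc (0:ℝ) 0) = 0 := by
  have h := muApply hμself (MeasurableSet.univ.prod measurableSet_Icc :
    MeasurableSet ((univ : Set ℝ) ×ˢ Icc (0:ℝ) 0))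
  rw [Fin.sum_univ_four, pre_strip_0, pre_strip_1, pre_strip_2, pre_strip_3] at h
  rw [show (2*(0:ℝ) - 0) = 0 by norm_num] at h
  rw [row_out_lt hμF hFsub (show (2*(0:ℝ) - 1) < 0 by norm_num)] at h
  refine ennreal_half (measure_ne_top μ _) ?_
  calc μ ((univ : Set ℝ) ×ˢ Icc (0:ℝ) 0)
      = 4⁻¹ * (μ ((univ : Set ℝ) ×ˢ Icc (0:ℝ) 0) + 0 + μ ((univ : Set ℝ) ×ˢ Icc (0:ℝ) 0) + 0) := h
    _ = 4⁻¹ * (2 * μ ((univ : Set ℝ) ×ˢ Icc (0:ℝ) 0)) := by rw [add_zero, add_zero, ← two_mul]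
    _ = 2⁻¹ * μ ((univ : Set ℝ) ×ˢ Icc (0:ℝ) 0) := q2 _
    _ ≤ 2⁻¹ * μ ((univ : Set ℝ) ×ˢ Icc (0:ℝ) 0) := le_rfl

lemma hline1 : μ ((univ : Set ℝ) ×ˢ Icc (1:ℝ) 1) = 0 := by
  have h := muApply hμself (MeasurableSet.univ.prod measurableSet_Icc :
    MeasurableSet ((univ : Set ℝ) ×ˢ Icc (1:ℝ) 1))
  rw [Fin.sum_univ_four, pre_strip_0, pre_strip_1, pre_strip_2, pre_strip_3] at h
  rw [show (2*(1:ℝ) - 1) = 1 by norm_num] at h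
  rw [row_out_gt hμF hFsub (show (1:ℝ) < 2*1 - 0 by norm_num)] at h
  refine ennreal_half (measure_ne_top μ _) ?_
  calc μ ((univ : Set ℝ) ×ˢ Icc (1:ℝ) 1)
      = 4⁻¹ * (0 + μ ((univ : Set ℝ) ×ˢ Icc (1:ℝ) 1) + 0 + μ ((univ : Set ℝ) ×ˢ Icc (1:ℝ) 1)) := h
    _ = 4⁻¹ * (2 * μ ((univ : Set ℝ) ×ˢ Icc (1:ℝ) 1)) := by
        rw [zero_add, add_zero]  -- leaves a + a? fix below
        rw [← two_mul]
    _ = 2⁻¹ * μ ((univ : Set ℝ) ×ˢ Icc (1:ℝ) 1) := q2 _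
    _ ≤ 2⁻¹ * μ ((univ : Set ℝ) ×ˢ Icc (1:ℝ) 1) := le_rfl


lemma topStrip : ∀ (m : ℕ) (y : ℝ), 1 - y ≤ (1/2:ℝ)^m →
    μ ((univ : Set ℝ) ×ˢ Icc y 1) ≤ (2:ℝ≥0∞)⁻¹^m := by
  intro m
  induction m with
  | zero => intro y _; simpa using prob_le_one
  | succ m IH =>
    intro y hy
    have hpow : (1/2:ℝ)^(m+1) ≤ (1/2:ℝ)^1 := pow_le_pow_of_le_one (by norm_num) (by norm_num) (by omega)
    have hy2 : (1:ℝ)/2 ≤ y := by rw [pow_one] at hpow; linarith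
    have h := muApply hμself (MeasurableSet.univ.prod measurableSet_Icc :
      MeasurableSet ((univ : Set ℝ) ×ˢ Icc y 1))
    rw [Fin.sum_univ_four, pre_strip_0, pre_strip_1, pre_strip_2, pre_strip_3] at h
    have z0 : μ ((univ : Set ℝ) ×ˢ Icc (2*y - 0) (2*1 - 0)) = 0 := by
      refine le_antisymm ((mu_le_box hμF hFsub ?_).trans_eq (hline1 hμF hFsub hμself)) (zero_le)
      rintro z ⟨⟨-, hz1, hz2⟩, -, hz3, hz4⟩
      exact ⟨mem_univ _, by linarith, hz4⟩
    rw [z0] at h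
    rw [show (2*(1:ℝ) - 1) = 1 by norm_num] at h
    have epow : (1/2:ℝ)^(m+1) = (1/2:ℝ)^m * (1/2) := pow_succ _ _
    have ht : μ ((univ : Set ℝ) ×ˢ Icc (2*y - 1) 1) ≤ (2:ℝ≥0∞)⁻¹^m := by
      apply IH; linarith
    calc μ ((univ : Set ℝ) ×ˢ Icc y 1)
        = 4⁻¹ * (0 + μ ((univ : Set ℝ) ×ˢ Icc (2*y - 1) 1) + 0
            + μ ((univ : Set ℝ) ×ˢ Icc (2*y - 1) 1)) := h
      _ ≤ 4⁻¹ * (0 + (2:ℝ≥0∞)⁻¹^m + 0 + (2:ℝ≥0∞)⁻¹^m) := by gcongr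
      _ = 4⁻¹ * (2 * (2:ℝ≥0∞)⁻¹^m) := by ring
      _ = 2⁻¹ * (2:ℝ≥0∞)⁻¹^m := q2 _
      _ = (2:ℝ≥0∞)⁻¹^(m+1) := by ring

lemma botStrip : ∀ (m : ℕ) (k : ℝ), k ≤ (1/2:ℝ)^m →
    μ ((univ : Set ℝ) ×ˢ Icc 0 k) ≤ (2:ℝ≥0∞)⁻¹^m := by
  intro m
  induction m with
  | zero => intro k _; simpa using prob_le_one
  | succ m IH =>
    intro k hk
    have hpow : (1/2:ℝ)^(m+1) ≤ (1/2:ℝ)^1 := pow_le_pow_of_le_one (by norm_num) (by norm_num) (by omega)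
    have hk2 : k ≤ 1/2 := by rw [pow_one] at hpow; linarith
    have h := muApply hμself (MeasurableSet.univ.prod measurableSet_Icc :
      MeasurableSet ((univ : Set ℝ) ×ˢ Icc (0:ℝ) k))
    rw [Fin.sum_univ_four, pre_strip_0, pre_strip_1, pre_strip_2, pre_strip_3] at h
    have z1 : μ ((univ : Set ℝ) ×ˢ Icc (2*(0:ℝ) - 1) (2*k - 1)) = 0 := by
      refine le_antisymm ((mu_le_box hμF hFsub ?_).trans_eq (hline0 hμF hFsub hμself)) (zero_le)
      rintro z ⟨⟨-, hz1, hz2⟩, -, hz3, hz4⟩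
      exact ⟨mem_univ _, hz3, by linarith⟩
    rw [z1] at h
    rw [show (2*(0:ℝ) - 0) = 0 by norm_num, show (2*k - (0:ℝ)) = 2*k by ring] at h
    have epow : (1/2:ℝ)^(m+1) = (1/2:ℝ)^m * (1/2) := pow_succ _ _
    have ht : μ ((univ : Set ℝ) ×ˢ Icc (0:ℝ) (2*k)) ≤ (2:ℝ≥0∞)⁻¹^m := by
      apply IH; linarith
    calc μ ((univ : Set ℝ) ×ˢ Icc (0:ℝ) k)
        = 4⁻¹ * (μ ((univ : Set ℝ) ×ˢ Icc (0:ℝ) (2*k)) + 0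
            + μ ((univ : Set ℝ) ×ˢ Icc (0:ℝ) (2*k)) + 0) := h
      _ ≤ 4⁻¹ * ((2:ℝ≥0∞)⁻¹^m + 0 + (2:ℝ≥0∞)⁻¹^m + 0) := by gcongr
      _ = 4⁻¹ * (2 * (2:ℝ≥0∞)⁻¹^m) := by ring
      _ = 2⁻¹ * (2:ℝ≥0∞)⁻¹^m := q2 _
      _ = (2:ℝ≥0∞)⁻¹^(m+1) := by ring

lemma strip : ∀ (m : ℕ) (y k : ℝ), 0 ≤ k → k ≤ (1/2:ℝ)^m →
    μ ((univ : Set ℝ) ×ˢ Icc y (y + k)) ≤ 2 * (2:ℝ≥0∞)⁻¹^m := by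
  intro m
  induction m with
  | zero =>
    intro y k _ _
    refine prob_le_one.trans ?_
    simp only [pow_zero, mul_one]
    exact one_le_two
  | succ m IH =>
    intro y k hk0 hk
    have hpow : (1/2:ℝ)^(m+1) ≤ (1/2:ℝ)^1 := pow_le_pow_of_le_one (by norm_num) (by norm_num) (by omega)
    have hk2 : k ≤ 1/2 := by rw [pow_one] at hpow; linarith
    have epow : (1/2:ℝ)^(m+1) = (1/2:ℝ)^m * (1/2) := pow_succ _ _
    have h := muApply hμself (MeasurableSet.univ.prod measurableSet_Icc :
      MeasurableSet ((univ : Set ℝ) ×ˢ Icc y (y + k)))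
    rw [Fin.sum_univ_four, pre_strip_0, pre_strip_1, pre_strip_2, pre_strip_3] at h
    by_cases h1 : y + k < 1/2
    · rw [row_out_lt hμF hFsub (show 2*(y+k) - 1 < 0 by linarith)] at h
      rw [show (2*(y+k) - (0:ℝ)) = (2*y - 0) + 2*k by ring] at h
      have ht : μ ((univ : Set ℝ) ×ˢ Icc (2*y - 0) ((2*y - 0) + 2*k)) ≤ 2 * (2:ℝ≥0∞)⁻¹^m :=
        IH _ _ (by linarith) (by linarith)
      calc μ ((univ : Set ℝ) ×ˢ Icc y (y + k))
          = 4⁻¹ * (μ ((univ : Set ℝ) ×ˢ Icc (2*y - 0) ((2*y - 0) + 2*k)) + 0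
              + μ ((univ : Set ℝ) ×ˢ Icc (2*y - 0) ((2*y - 0) + 2*k)) + 0) := h
        _ ≤ 4⁻¹ * (2 * (2:ℝ≥0∞)⁻¹^m + 0 + 2 * (2:ℝ≥0∞)⁻¹^m + 0) := by gcongr
        _ = 4⁻¹ * (2 * (2 * (2:ℝ≥0∞)⁻¹^m)) := by ring
        _ = 2⁻¹ * (2 * (2:ℝ≥0∞)⁻¹^m) := q2 _
        _ = 2 * (2:ℝ≥0∞)⁻¹^(m+1) := by ring
    · by_cases h2 : 1/2 < y
      · rw [row_out_gt hμF hFsub (show (1:ℝ) < 2*y - 0 by linarith)] at h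
        rw [show (2*(y+k) - (1:ℝ)) = (2*y - 1) + 2*k by ring] at h
        have ht : μ ((univ : Set ℝ) ×ˢ Icc (2*y - 1) ((2*y - 1) + 2*k)) ≤ 2 * (2:ℝ≥0∞)⁻¹^m :=
          IH _ _ (by linarith) (by linarith)
        calc μ ((univ : Set ℝ) ×ˢ Icc y (y + k))
            = 4⁻¹ * (0 + μ ((univ : Set ℝ) ×ˢ Icc (2*y - 1) ((2*y - 1) + 2*k)) + 0
                + μ ((univ : Set ℝ) ×ˢ Icc (2*y - 1) ((2*y - 1) + 2*k))) := h
          _ ≤ 4⁻¹ * (0 + 2 * (2:ℝ≥0∞)⁻¹^m + 0 + 2 * (2:ℝ≥0∞)⁻¹^m) := by gcongr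
          _ = 4⁻¹ * (2 * (2 * (2:ℝ≥0∞)⁻¹^m)) := by ring
          _ = 2⁻¹ * (2 * (2:ℝ≥0∞)⁻¹^m) := q2 _
          _ = 2 * (2:ℝ≥0∞)⁻¹^(m+1) := by ring
      · push_neg at h1 h2
        have ht0 : μ ((univ : Set ℝ) ×ˢ Icc (2*y - 0) (2*(y+k) - 0)) ≤ (2:ℝ≥0∞)⁻¹^m := by
          refine (mu_le_box hμF hFsub ?_).trans (topStrip hμF hFsub hμself m (2*y - 0) (by linarith))
          rintro z ⟨⟨-, hz1, hz2⟩, -, hz3, hz4⟩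
          exact ⟨mem_univ _, hz1, hz4⟩
        have ht1 : μ ((univ : Set ℝ) ×ˢ Icc (2*y - 1) (2*(y+k) - 1)) ≤ (2:ℝ≥0∞)⁻¹^m := by
          refine (mu_le_box hμF hFsub ?_).trans (botStrip hμF hFsub hμself m (2*(y+k) - 1) (by linarith))
          rintro z ⟨⟨-, hz1, hz2⟩, -, hz3, hz4⟩
          exact ⟨mem_univ _, hz3, by linarith⟩
        calc μ ((univ : Set ℝ) ×ˢ Icc y (y + k))
            = 4⁻¹ * (μ ((univ : Set ℝ) ×ˢ Icc (2*y - 0) (2*(y+k) - 0))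
                + μ ((univ : Set ℝ) ×ˢ Icc (2*y - 1) (2*(y+k) - 1))
                + μ ((univ : Set ℝ) ×ˢ Icc (2*y - 0) (2*(y+k) - 0))
                + μ ((univ : Set ℝ) ×ˢ Icc (2*y - 1) (2*(y+k) - 1))) := h
          _ ≤ 4⁻¹ * ((2:ℝ≥0∞)⁻¹^m + (2:ℝ≥0∞)⁻¹^m + (2:ℝ≥0∞)⁻¹^m + (2:ℝ≥0∞)⁻¹^m) := by gcongr
          _ = 4⁻¹ * (4 * (2:ℝ≥0∞)⁻¹^m) := by ring
          _ = (2:ℝ≥0∞)⁻¹^m := q4 _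
          _ = 2 * (2:ℝ≥0∞)⁻¹^(m+1) := by
              rw [pow_succ, mul_comm ((2:ℝ≥0∞)⁻¹^m) _, ← mul_assoc, two_inv_cancel, one_mul]


lemma colZero (n : ℕ) (c : ℤ) (hc : c < 0 ∨ (4:ℤ)^n ≤ c) (t : Set ℝ) :
    μ (Icc ((c:ℝ)/4^n) (((c:ℝ)+1)/4^n) ×ˢ t) = 0 := by
  have h4 : (0:ℝ) < 4^n := by positivity
  rcases hc with hc | hc
  · refine le_antisymm ((mu_le_box hμF hFsub ?_).trans_eq (vline0 hμF hFsub hμself)) (zero_le)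
    rintro z ⟨⟨⟨hz1, hz2⟩, -⟩, ⟨hz3, hz4⟩, -⟩
    have hcr : (c:ℝ) + 1 ≤ 0 := by
      have : (c:ℝ) ≤ -1 := by exact_mod_cast (by omega : c ≤ -1)
      linarith
    have : ((c:ℝ)+1)/4^n ≤ 0 := div_nonpos_iff.2 (Or.inr ⟨hcr, h4.le⟩)
    exact ⟨⟨hz3, by linarith⟩, trivial⟩
  · refine le_antisymm ((mu_le_box hμF hFsub ?_).trans_eq (vline1 hμF hFsub hμself)) (zero_le)
    rintro z ⟨⟨⟨hz1, hz2⟩, -⟩, ⟨hz3, hz4⟩, -⟩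
    have hcr : (4:ℝ)^n ≤ (c:ℝ) := by exact_mod_cast hc
    have : (1:ℝ) ≤ (c:ℝ)/4^n := (one_le_div h4).2 hcr
    exact ⟨⟨by linarith, hz4⟩, trivial⟩

lemma alignedCol : ∀ (n : ℕ) (c : ℤ) (m : ℕ) (y k : ℝ), 0 ≤ k → k ≤ (1/2:ℝ)^(n+m) →
    μ (Icc ((c:ℝ)/4^n) (((c:ℝ)+1)/4^n) ×ˢ Icc y (y+k)) ≤ 2 * (4:ℝ≥0∞)⁻¹^n * (2:ℝ≥0∞)⁻¹^m := by
  intro n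
  induction n with
  | zero =>
    intro c m y k hk0 hk
    rw [pow_zero, pow_zero, mul_one]
    refine (measure_mono (Set.prod_mono (subset_univ _) le_rfl)).trans ?_
    exact strip hμF hFsub hμself m y k hk0 (by simpa using hk)
  | succ n IH =>
    intro c m y k hk0 hk
    have h4 : (0:ℝ) < 4^n := by positivity
    have hp : (0:ℤ) < 4^n := by positivity
    have h := muApply hμself ((measurableSet_Icc.prod measurableSet_Icc) :
      MeasurableSet (Icc ((c:ℝ)/4^(n+1)) (((c:ℝ)+1)/4^(n+1)) ×ˢ Icc y (y+k)))
    rw [Fin.sum_univ_four, pre_rect_0, pre_rect_1, pre_rect_2, pre_rect_3] at h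
    have E01 : 4*((c:ℝ)/4^(n+1)) - 0 = (((c - 0*4^n : ℤ)):ℝ)/4^n := by push_cast; field_simp; ring
    have E02 : 4*(((c:ℝ)+1)/4^(n+1)) - 0 = ((((c - 0*4^n : ℤ)):ℝ)+1)/4^n := by push_cast; field_simp; ring
    have E11 : 4*((c:ℝ)/4^(n+1)) - 1 = (((c - 1*4^n : ℤ)):ℝ)/4^n := by push_cast; field_simp; ring
    have E12 : 4*(((c:ℝ)+1)/4^(n+1)) - 1 = ((((c - 1*4^n : ℤ)):ℝ)+1)/4^n := by push_cast; field_simp; ring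
    have E21 : 4*((c:ℝ)/4^(n+1)) - 2 = (((c - 2*4^n : ℤ)):ℝ)/4^n := by push_cast; field_simp; ring
    have E22 : 4*(((c:ℝ)+1)/4^(n+1)) - 2 = ((((c - 2*4^n : ℤ)):ℝ)+1)/4^n := by push_cast; field_simp; ring
    have E31 : 4*((c:ℝ)/4^(n+1)) - 3 = (((c - 3*4^n : ℤ)):ℝ)/4^n := by push_cast; field_simp; ring
    have E32 : 4*(((c:ℝ)+1)/4^(n+1)) - 3 = ((((c - 3*4^n : ℤ)):ℝ)+1)/4^n := by push_cast; field_simp; ring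
    rw [E01, E02, E11, E12, E21, E22, E31, E32,
      show 2*(y+k) - (0:ℝ) = (2*y - 0) + 2*k by ring,
      show 2*(y+k) - (1:ℝ) = (2*y - 1) + 2*k by ring] at h
    have hk' : 2*k ≤ (1/2:ℝ)^(n+m) := by
      have epow : (1/2:ℝ)^(n+1+m) = (1/2:ℝ)^(n+m) * (1/2) := by
        rw [show n+1+m = (n+m)+1 by omega, pow_succ]
      linarith
    set B : ℝ≥0∞ := 2 * (4:ℝ≥0∞)⁻¹^n * (2:ℝ≥0∞)⁻¹^m with hB
    have hBtarget : (4:ℝ≥0∞)⁻¹ * B = 2 * (4:ℝ≥0∞)⁻¹^(n+1) * (2:ℝ≥0∞)⁻¹^m := by rw [hB]; ring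
    have good : ∀ (c' : ℤ) (y' : ℝ), μ (Icc ((c':ℝ)/4^n) (((c':ℝ)+1)/4^n) ×ˢ
        Icc y' (y' + 2*k)) ≤ B :=
      fun c' y' => IH c' m y' (2*k) (by linarith) hk'
    have zero : ∀ (c' : ℤ), c' < 0 ∨ (4:ℤ)^n ≤ c' → ∀ (y' : ℝ),
        μ (Icc ((c':ℝ)/4^n) (((c':ℝ)+1)/4^n) ×ˢ Icc y' (y' + 2*k)) = 0 :=
      fun c' hc y' => colZero hμF hFsub hμself n c' hc _
    rw [h, ← hBtarget]
    rcases lt_or_ge c 0 with hc | hc0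
    · rw [zero _ (Or.inl (by omega)) _, zero _ (Or.inl (by omega)) _,
        zero _ (Or.inl (by omega)) _, zero _ (Or.inl (by omega)) _]
      simp
    · rcases lt_or_ge c ((4:ℤ)^n) with hc1 | hc1
      · rw [zero (c - 1*4^n) (Or.inl (by omega)) _, zero (c - 2*4^n) (Or.inl (by omega)) _,
          zero (c - 3*4^n) (Or.inl (by omega)) _]
        calc (4:ℝ≥0∞)⁻¹ * (μ _ + 0 + 0 + 0) ≤ 4⁻¹ * (B + 0 + 0 + 0) := by gcongr; exact good _ _
          _ = 4⁻¹ * B := by rw [add_zero, add_zero, add_zero]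
      · rcases lt_or_ge c (2*(4:ℤ)^n) with hc2 | hc2
        · rw [zero (c - 0*4^n) (Or.inr (by omega)) _, zero (c - 2*4^n) (Or.inl (by omega)) _,
            zero (c - 3*4^n) (Or.inl (by omega)) _]
          calc (4:ℝ≥0∞)⁻¹ * (0 + μ _ + 0 + 0) ≤ 4⁻¹ * (0 + B + 0 + 0) := by gcongr; exact good _ _
            _ = 4⁻¹ * B := by rw [zero_add, add_zero, add_zero]
        · rcases lt_or_ge c (3*(4:ℤ)^n) with hc3 | hc3
          · rw [zero (c - 0*4^n) (Or.inr (by omega)) _, zero (c - 1*4^n) (Or.inr (by omega)) _,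
              zero (c - 3*4^n) (Or.inl (by omega)) _]
            calc (4:ℝ≥0∞)⁻¹ * (0 + 0 + μ _ + 0) ≤ 4⁻¹ * (0 + 0 + B + 0) := by
                  gcongr; exact good _ _
              _ = 4⁻¹ * B := by rw [zero_add, zero_add, add_zero]
          · rcases lt_or_ge c (4*(4:ℤ)^n) with hc4 | hc4
            · rw [zero (c - 0*4^n) (Or.inr (by omega)) _, zero (c - 1*4^n) (Or.inr (by omega)) _,
                zero (c - 2*4^n) (Or.inr (by omega)) _]
              calc (4:ℝ≥0∞)⁻¹ * (0 + 0 + 0 + μ _) ≤ 4⁻¹ * (0 + 0 + 0 + B) := by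
                    gcongr; exact good _ _
                _ = 4⁻¹ * B := by rw [zero_add, zero_add, zero_add]
            · rw [zero (c - 0*4^n) (Or.inr (by omega)) _, zero (c - 1*4^n) (Or.inr (by omega)) _,
                zero (c - 2*4^n) (Or.inr (by omega)) _, zero (c - 3*4^n) (Or.inr (by omega)) _]
              simp


omit hμF hFsub hμself in
lemma q8 : (4:ℝ≥0∞)⁻¹ * 2⁻¹ = 8⁻¹ := by
  rw [show (8:ℝ≥0∞) = 4*2 by norm_num,
    ENNReal.mul_inv (Or.inl (by norm_num)) (Or.inl (by norm_num))]

lemma squareBound (n : ℕ) (x y h : ℝ) (h0 : 0 ≤ h) (hh : h ≤ (1/4:ℝ)^n) :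
    μ (Icc x (x+h) ×ˢ Icc y (y+h)) ≤ 4 * (8:ℝ≥0∞)⁻¹^n := by
  have h4 : (0:ℝ) < 4^n := by positivity
  set c : ℤ := ⌊x * 4^n⌋ with hc
  have hc1 : ((c:ℝ))/4^n ≤ x := by
    rw [div_le_iff₀ h4]; exact Int.floor_le _
  have hc2 : x < ((c:ℝ)+1)/4^n := by
    rw [lt_div_iff₀ h4]; exact Int.lt_floor_add_one _
  have hq : (1/4:ℝ)^n = 1/4^n := by rw [div_pow, one_pow]
  have hsub : Icc x (x+h) ×ˢ Icc y (y+h) ⊆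
      (Icc ((c:ℝ)/4^n) (((c:ℝ)+1)/4^n) ×ˢ Icc y (y+h)) ∪
      (Icc (((c+1:ℤ):ℝ)/4^n) ((((c+1:ℤ):ℝ)+1)/4^n) ×ˢ Icc y (y+h)) := by
    rintro z ⟨⟨hz1, hz2⟩, hz3⟩
    rcases le_or_gt z.1 (((c:ℝ)+1)/4^n) with hcase | hcase
    · exact Or.inl ⟨⟨by linarith, hcase⟩, hz3⟩
    · refine Or.inr ⟨⟨?_, ?_⟩, hz3⟩
      · push_cast; linarith
      · push_cast
        have hstep : ((c:ℝ)+1)/4^n + 1/4^n = ((c:ℝ)+1+1)/4^n := (add_div _ _ _).symm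
        rw [hq] at hh
        linarith
  have hk : h ≤ (1/2:ℝ)^(n+n) := by
    have : ((1:ℝ)/2)^(n+n) = (1/4)^n := by
      rw [← two_mul, pow_mul]; norm_num
    linarith
  calc μ (Icc x (x+h) ×ˢ Icc y (y+h))
      ≤ μ (Icc ((c:ℝ)/4^n) (((c:ℝ)+1)/4^n) ×ˢ Icc y (y+h)) +
        μ (Icc (((c+1:ℤ):ℝ)/4^n) ((((c+1:ℤ):ℝ)+1)/4^n) ×ˢ Icc y (y+h)) :=
      (measure_mono hsub).trans (measure_union_le _ _)
    _ ≤ 2 * (4:ℝ≥0∞)⁻¹^n * (2:ℝ≥0∞)⁻¹^n + 2 * (4:ℝ≥0∞)⁻¹^n * (2:ℝ≥0∞)⁻¹^n :=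
        add_le_add (alignedCol hμF hFsub hμself n c n y h h0 hk)
          (alignedCol hμF hFsub hμself n (c+1) n y h h0 hk)
    _ = 4 * ((4:ℝ≥0∞)⁻¹ * 2⁻¹)^n := by rw [mul_pow]; ring
    _ = 4 * (8:ℝ≥0∞)⁻¹^n := by rw [q8]

omit hμF hFsub hμself in
lemma sq_rpow (a : ℝ) (ha : 0 ≤ a) : ((a^2:ℝ))^(3/2:ℝ) = a^3 := by
  rw [← Real.rpow_natCast a 2, ← Real.rpow_mul ha, show ((2:ℕ):ℝ) * (3/2:ℝ) = ((3:ℕ):ℝ) by norm_num,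
    Real.rpow_natCast]

omit hμF hFsub hμself in
lemma rpow38 (k : ℕ) : ((1/4:ℝ)^k)^(3/2:ℝ) = (1/8:ℝ)^k := by
  rw [show (1/4:ℝ) = (1/2:ℝ)^2 by norm_num, show (1/8:ℝ) = (1/2:ℝ)^3 by norm_num,
    pow_right_comm ((1/2):ℝ) 2 k, sq_rpow _ (by positivity), pow_right_comm]

lemma mainBound (x y h : ℝ) (h0 : 0 ≤ h) :
    μ (Icc x (x+h) ×ˢ Icc y (y+h)) ≤ ENNReal.ofReal (32 * h ^ (3/2:ℝ)) := by
  rcases eq_or_lt_of_le h0 with hz | hpos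
  · have hb : ∀ n : ℕ, μ (Icc x (x+h) ×ˢ Icc y (y+h)) ≤ 4 * (8:ℝ≥0∞)⁻¹^n := by
      intro n
      exact squareBound hμF hFsub hμself n x y h h0 (by rw [← hz]; positivity)
    have htend : Filter.Tendsto (fun n : ℕ => (4:ℝ≥0∞) * 8⁻¹^n) Filter.atTop (nhds 0) := by
      have : Filter.Tendsto (fun n : ℕ => ((8:ℝ≥0∞)⁻¹)^n) Filter.atTop (nhds 0) :=
        ENNReal.tendsto_pow_atTop_nhds_zero_of_lt_one (by
          rw [ENNReal.inv_lt_one]; norm_num)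
      have h2 := ENNReal.Tendsto.const_mul this (Or.inr (by norm_num : (4:ℝ≥0∞) ≠ ⊤))
      simpa using h2
    have : μ (Icc x (x+h) ×ˢ Icc y (y+h)) ≤ 0 := ge_of_tendsto' htend hb
    exact this.trans (zero_le)
  · rcases le_or_gt h 1 with h1 | h1
    · have hex : ∃ k : ℕ, (1/4:ℝ)^k < h := exists_pow_lt_of_lt_one hpos (by norm_num)
      have hfind : (1/4:ℝ)^(Nat.find hex) < h := Nat.find_spec hex
      have hn0 : Nat.find hex ≠ 0 := by
        intro hzero
        rw [hzero, pow_zero] at hfind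
        linarith
      set n := Nat.find hex - 1 with hn
      have hle : h ≤ (1/4:ℝ)^n := not_lt.1 (Nat.find_min hex (by omega))
      have hgt : (1/4:ℝ)^(n+1) < h := by
        rw [show n + 1 = Nat.find hex by omega]
        exact hfind
      have key := squareBound hμF hFsub hμself n x y h h0 hle
      refine key.trans ?_
      have e1 : (4:ℝ≥0∞) * 8⁻¹^n = ENNReal.ofReal (4 * (1/8:ℝ)^n) := by
        rw [ENNReal.ofReal_mul (by norm_num), ENNReal.ofReal_pow (by norm_num)]
        congr 1
        · norm_num
        · congr 1
          rw [one_div, ENNReal.ofReal_inv_of_pos (by norm_num)]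
          norm_num
      rw [e1]
      apply ENNReal.ofReal_le_ofReal
      have hmono : ((1/4:ℝ)^n)^(3/2:ℝ) ≤ (4*h)^(3/2:ℝ) := by
        apply Real.rpow_le_rpow (by positivity) _ (by norm_num)
        have : (1/4:ℝ)^n = 4 * (1/4)^(n+1) := by ring
        linarith
      rw [rpow38] at hmono
      have h43 : ((4:ℝ)*h)^(3/2:ℝ) = 8 * h^(3/2:ℝ) := by
        rw [Real.mul_rpow (by norm_num) h0, show (4:ℝ) = 2^2 by norm_num, sq_rpow 2 (by norm_num)]
        norm_num
      rw [h43] at hmono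
      nlinarith [Real.rpow_nonneg h0 (3/2:ℝ)]
    · refine (prob_le_one).trans ?_
      have : (1:ℝ) ≤ h ^ (3/2:ℝ) := by
        rw [show (1:ℝ) = (1:ℝ)^(3/2:ℝ) by rw [Real.one_rpow]]
        exact Real.rpow_le_rpow (by norm_num) h1.le (by norm_num)
      rw [show (1:ℝ≥0∞) = ENNReal.ofReal 1 by simp]
      exact ENNReal.ofReal_le_ofReal (by nlinarith)


lemma keyDiam {s : Set (ℝ × ℝ)} (hs : EMetric.diam s ≤ 1) :
    μ s ≤ 256 * EMetric.diam s ^ (3/2:ℝ) := by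
  rcases Set.eq_empty_or_nonempty s with rfl | ⟨z, hz⟩
  · simp
  · have hdne : EMetric.diam s ≠ ⊤ := (hs.trans_lt (by norm_num)).ne
    set d := (EMetric.diam s).toReal with hd
    have hd0 : (0:ℝ) ≤ d := ENNReal.toReal_nonneg
    have hsub : s ⊆ Icc (z.1 - d) ((z.1 - d) + 2*d) ×ˢ Icc (z.2 - d) ((z.2 - d) + 2*d) := by
      intro w hw
      have hdist : dist w z ≤ d := by
        rw [dist_edist]
        exact ENNReal.toReal_mono hdne (EMetric.edist_le_diam_of_mem hw hz)
      rw [Prod.dist_eq, max_le_iff, Real.dist_eq, Real.dist_eq, abs_le, abs_le] at hdist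
      obtain ⟨⟨h1, h2⟩, h3, h4⟩ := hdist
      exact ⟨⟨by linarith, by linarith⟩, by linarith, by linarith⟩
    have hmb := mainBound hμF hFsub hμself (z.1 - d) (z.2 - d) (2*d) (by linarith)
    refine (measure_mono hsub).trans (hmb.trans ?_)
    have h43 : ((4:ℝ)*d)^(3/2:ℝ) = 8 * d^(3/2:ℝ) := by
      rw [Real.mul_rpow (by norm_num) hd0, show (4:ℝ) = 2^2 by norm_num, sq_rpow 2 (by norm_num)]
      norm_num
    have hmono : (2*d:ℝ)^(3/2:ℝ) ≤ (4*d)^(3/2:ℝ) :=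
      Real.rpow_le_rpow (by linarith) (by linarith) (by norm_num)
    have hle : 32 * (2*d:ℝ)^(3/2:ℝ) ≤ 256 * d^(3/2:ℝ) := by
      rw [h43] at hmono; nlinarith [Real.rpow_nonneg hd0 (3/2:ℝ)]
    calc ENNReal.ofReal (32 * (2*d)^(3/2:ℝ)) ≤ ENNReal.ofReal (256 * d^(3/2:ℝ)) :=
          ENNReal.ofReal_le_ofReal hle
      _ = 256 * ENNReal.ofReal (d^(3/2:ℝ)) := by
          rw [ENNReal.ofReal_mul (by norm_num)]
          congr 1
          norm_num
      _ = 256 * (ENNReal.ofReal d)^(3/2:ℝ) := by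
          rw [ENNReal.ofReal_rpow_of_nonneg hd0 (by norm_num)]
      _ = 256 * EMetric.diam s ^ (3/2:ℝ) := by rw [hd, ENNReal.ofReal_toReal hdne]

lemma hausdorffPos (hFc : IsCompact F) : 0 < μH[(3/2:ℝ)] F := by
  have hμF1 : μ F = 1 := by
    have hm : MeasurableSet F := hFc.isClosed.measurableSet
    have h := measure_add_measure_compl (μ := μ) hm
    rw [hμF, add_zero, measure_univ] at h
    exact h
  have h256 : (256:ℝ≥0∞)⁻¹ * 256 = 1 := ENNReal.inv_mul_cancel (by norm_num) (by norm_num)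
  have hνle : (256:ℝ≥0∞)⁻¹ • μ ≤ μH[(3/2:ℝ)] := by
    refine Measure.le_hausdorffMeasure _ _ 1 (by norm_num) (fun s hs => ?_)
    have := keyDiam hμF hFsub hμself (s := s) hs
    rw [Measure.smul_apply, smul_eq_mul]
    calc (256:ℝ≥0∞)⁻¹ * μ s ≤ 256⁻¹ * (256 * EMetric.diam s ^ (3/2:ℝ)) := by gcongr
      _ = (256⁻¹ * 256) * EMetric.diam s ^ (3/2:ℝ) := by rw [mul_assoc]
      _ = EMetric.diam s ^ (3/2:ℝ) := by rw [h256, one_mul]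
  have : (256:ℝ≥0∞)⁻¹ ≤ μH[(3/2:ℝ)] F := by
    have := Measure.le_iff'.1 hνle F
    rwa [Measure.smul_apply, smul_eq_mul, hμF1, mul_one] at this
  exact lt_of_lt_of_le (by norm_num) this


end lines

section geom
variable {F : Set (ℝ × ℝ)}

lemma sa_fst (i : Fin 4) (z : ℝ × ℝ) : (selfAffineMap i z).1 = z.1/4 + A i := rfl
lemma sa_snd (i : Fin 4) (z : ℝ × ℝ) : (selfAffineMap i z).2 = z.2/2 + B i := rfl

lemma mapsTo (hFinv : F = ⋃ i : Fin 4, selfAffineMap i '' F) (i : Fin 4) {z : ℝ × ℝ}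
    (hz : z ∈ F) : selfAffineMap i z ∈ F := by
  have h : selfAffineMap i z ∈ ⋃ j : Fin 4, selfAffineMap j '' F :=
    mem_iUnion.2 ⟨i, mem_image_of_mem _ hz⟩
  rwa [← hFinv] at h

lemma digit_of_mem (hFinv : F = ⋃ i : Fin 4, selfAffineMap i '' F) {z : ℝ × ℝ} (hz : z ∈ F) :
    ∃ i : Fin 4, ∃ z' ∈ F, z = selfAffineMap i z' := by
  rw [hFinv] at hz
  simp only [mem_iUnion, mem_image] at hz
  obtain ⟨i, z', hz', he⟩ := hz
  exact ⟨i, z', hz', he.symm⟩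

lemma approx (hFne : F.Nonempty) (hFsub : F ⊆ Icc 0 1 ×ˢ Icc 0 1)
    (hFinv : F = ⋃ i : Fin 4, selfAffineMap i '' F) :
    ∀ n : ℕ, ∀ x ∈ Icc (0:ℝ) 1, ∃ z ∈ F, |z.1 - x| ≤ (1/4:ℝ)^n := by
  intro n
  induction n with
  | zero =>
    intro x hx
    obtain ⟨z, hz⟩ := hFne
    obtain ⟨⟨hz1, hz2⟩, -⟩ := hFsub hz
    exact ⟨z, hz, by rw [pow_zero, abs_le]; constructor <;> [linarith [hx.2]; linarith [hx.1]]⟩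
  | succ n IH =>
    intro x hx
    obtain ⟨hx1, hx2⟩ := hx
    have hps : (1/4:ℝ)^(n+1) = (1/4)^n * (1/4) := pow_succ _ _
    rcases le_or_gt x (1/4) with h1 | h1
    · obtain ⟨z, hz, hd⟩ := IH (4*x) ⟨by linarith, by linarith⟩
      refine ⟨selfAffineMap 0 z, mapsTo hFinv 0 hz, ?_⟩
      rw [sa_fst, A0, abs_le] at *
      constructor <;> [linarith [hd.1]; linarith [hd.2]]
    · rcases le_or_gt x (1/2) with h2 | h2
      · obtain ⟨z, hz, hd⟩ := IH (4*x - 1) ⟨by linarith, by linarith⟩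
        refine ⟨selfAffineMap 1 z, mapsTo hFinv 1 hz, ?_⟩
        rw [sa_fst, A1, abs_le] at *
        constructor <;> [linarith [hd.1]; linarith [hd.2]]
      · rcases le_or_gt x (3/4) with h3 | h3
        · obtain ⟨z, hz, hd⟩ := IH (4*x - 2) ⟨by linarith, by linarith⟩
          refine ⟨selfAffineMap 2 z, mapsTo hFinv 2 hz, ?_⟩
          rw [sa_fst, A2, abs_le] at *
          constructor <;> [linarith [hd.1]; linarith [hd.2]]
        · obtain ⟨z, hz, hd⟩ := IH (4*x - 3) ⟨by linarith, by linarith⟩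
          refine ⟨selfAffineMap 3 z, mapsTo hFinv 3 hz, ?_⟩
          rw [sa_fst, A3, abs_le] at *
          constructor <;> [linarith [hd.1]; linarith [hd.2]]

lemma projF (hFc : IsCompact F) (hFne : F.Nonempty) (hFsub : F ⊆ Icc 0 1 ×ˢ Icc 0 1)
    (hFinv : F = ⋃ i : Fin 4, selfAffineMap i '' F) :
    Prod.fst '' F = Icc (0:ℝ) 1 := by
  apply Subset.antisymm
  · rintro x ⟨z, hz, rfl⟩
    exact (hFsub hz).1
  · intro x hx
    have hcl : IsClosed (Prod.fst '' F) := (hFc.image continuous_fst).isClosed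
    rw [← hcl.closure_eq]
    apply Metric.mem_closure_iff.2
    intro ε hε
    obtain ⟨n, hn⟩ := exists_pow_lt_of_lt_one hε (show (1/4:ℝ) < 1 by norm_num)
    obtain ⟨z, hzF, hzd⟩ := approx hFne hFsub hFinv n x hx
    refine ⟨z.1, ⟨z, hzF, rfl⟩, ?_⟩
    rw [Real.dist_eq, abs_sub_comm]
    exact lt_of_le_of_lt hzd hn

end geom


section slices
variable {F : Set (ℝ × ℝ)}

lemma ABcases (i : Fin 4) :
    (i = 0 ∧ A i = 0 ∧ B i = 0) ∨ (i = 1 ∧ A i = 1/4 ∧ B i = 1/2) ∨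
    (i = 2 ∧ A i = 1/2 ∧ B i = 0) ∨ (i = 3 ∧ A i = 3/4 ∧ B i = 1/2) := by
  fin_cases i
  · exact Or.inl ⟨rfl, rfl, rfl⟩
  · exact Or.inr (Or.inl ⟨rfl, rfl, rfl⟩)
  · exact Or.inr (Or.inr (Or.inl ⟨rfl, rfl, rfl⟩))
  · exact Or.inr (Or.inr (Or.inr ⟨rfl, rfl, rfl⟩))

lemma abs_le_all {d : ℝ} (h : ∀ n : ℕ, |d| ≤ (1/2:ℝ)^n) : d = 0 := by
  by_contra hd
  obtain ⟨n, hn⟩ := exists_pow_lt_of_lt_one (abs_pos.2 (sub_ne_zero.1 (by simpa using hd)))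
    (show (1/2:ℝ) < 1 by norm_num)
  exact absurd (h n) (not_le.2 (by simpa using hn))

lemma sliceZero (hFsub : F ⊆ Icc 0 1 ×ˢ Icc 0 1)
    (hFinv : F = ⋃ i : Fin 4, selfAffineMap i '' F) :
    ∀ z w, z ∈ F → w ∈ F → z.1 = 0 → w.1 = 0 → z = w := by
  have key : ∀ n : ℕ, ∀ z w, z ∈ F → w ∈ F → z.1 = 0 → w.1 = 0 →
      |z.2 - w.2| ≤ (1/2:ℝ)^n := by
    intro n
    induction n with
    | zero =>
      intro z w hz hw _ _
      obtain ⟨-, hz3, hz4⟩ := hFsub hz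
      obtain ⟨-, hw3, hw4⟩ := hFsub hw
      rw [pow_zero, abs_le]
      constructor <;> linarith
    | succ n IH =>
      intro z w hz hw hz0 hw0
      obtain ⟨i, z', hz', hez⟩ := digit_of_mem hFinv hz
      obtain ⟨j, w', hw', hew⟩ := digit_of_mem hFinv hw
      obtain ⟨⟨hz'1, hz'2⟩, -⟩ := hFsub hz'
      obtain ⟨⟨hw'1, hw'2⟩, -⟩ := hFsub hw'
      have hzfst : z.1 = z'.1/4 + A i := by rw [hez, sa_fst]
      have hwfst : w.1 = w'.1/4 + A j := by rw [hew, sa_fst]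
      have hzsnd : z.2 = z'.2/2 + B i := by rw [hez, sa_snd]
      have hwsnd : w.2 = w'.2/2 + B j := by rw [hew, sa_snd]
      have hiz : z'.1 = 0 ∧ B i = 0 := by
        rcases ABcases i with ⟨-, hA, hB⟩ | ⟨-, hA, hB⟩ | ⟨-, hA, hB⟩ | ⟨-, hA, hB⟩ <;>
          rw [hA] at hzfst <;> [skip; skip; skip; skip] <;> first
            | exact ⟨by linarith, hB⟩
            | (exfalso; linarith)
      have hjw : w'.1 = 0 ∧ B j = 0 := by
        rcases ABcases j with ⟨-, hA, hB⟩ | ⟨-, hA, hB⟩ | ⟨-, hA, hB⟩ | ⟨-, hA, hB⟩ <;>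
          rw [hA] at hwfst <;> first
            | exact ⟨by linarith, hB⟩
            | (exfalso; linarith)
      have hIH := IH z' w' hz' hw' hiz.1 hjw.1
      have habs : |z.2 - w.2| = |z'.2 - w'.2| / 2 := by
        rw [hzsnd, hwsnd, hiz.2, hjw.2,
          show z'.2/2 + 0 - (w'.2/2 + 0) = (z'.2 - w'.2)/2 by ring, abs_div, abs_two]
      rw [habs, pow_succ]
      linarith
  intro z w hz hw hz0 hw0
  have h2 : z.2 - w.2 = 0 := abs_le_all (fun n => key n z w hz hw hz0 hw0)
  exact Prod.ext (hz0.trans hw0.symm) (by linarith)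

lemma sliceOne (hFsub : F ⊆ Icc 0 1 ×ˢ Icc 0 1)
    (hFinv : F = ⋃ i : Fin 4, selfAffineMap i '' F) :
    ∀ z w, z ∈ F → w ∈ F → z.1 = 1 → w.1 = 1 → z = w := by
  have key : ∀ n : ℕ, ∀ z w, z ∈ F → w ∈ F → z.1 = 1 → w.1 = 1 →
      |z.2 - w.2| ≤ (1/2:ℝ)^n := by
    intro n
    induction n with
    | zero =>
      intro z w hz hw _ _
      obtain ⟨-, hz3, hz4⟩ := hFsub hz
      obtain ⟨-, hw3, hw4⟩ := hFsub hw
      rw [pow_zero, abs_le]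
      constructor <;> linarith
    | succ n IH =>
      intro z w hz hw hz0 hw0
      obtain ⟨i, z', hz', hez⟩ := digit_of_mem hFinv hz
      obtain ⟨j, w', hw', hew⟩ := digit_of_mem hFinv hw
      obtain ⟨⟨hz'1, hz'2⟩, -⟩ := hFsub hz'
      obtain ⟨⟨hw'1, hw'2⟩, -⟩ := hFsub hw'
      have hzfst : z.1 = z'.1/4 + A i := by rw [hez, sa_fst]
      have hwfst : w.1 = w'.1/4 + A j := by rw [hew, sa_fst]
      have hzsnd : z.2 = z'.2/2 + B i := by rw [hez, sa_snd]
      have hwsnd : w.2 = w'.2/2 + B j := by rw [hew, sa_snd]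
      have hiz : z'.1 = 1 ∧ B i = 1/2 := by
        rcases ABcases i with ⟨-, hA, hB⟩ | ⟨-, hA, hB⟩ | ⟨-, hA, hB⟩ | ⟨-, hA, hB⟩ <;>
          rw [hA] at hzfst <;> first
            | exact ⟨by linarith, hB⟩
            | (exfalso; linarith)
      have hjw : w'.1 = 1 ∧ B j = 1/2 := by
        rcases ABcases j with ⟨-, hA, hB⟩ | ⟨-, hA, hB⟩ | ⟨-, hA, hB⟩ | ⟨-, hA, hB⟩ <;>
          rw [hA] at hwfst <;> first
            | exact ⟨by linarith, hB⟩
            | (exfalso; linarith)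
      have hIH := IH z' w' hz' hw' hiz.1 hjw.1
      have habs : |z.2 - w.2| = |z'.2 - w'.2| / 2 := by
        rw [hzsnd, hwsnd, hiz.2, hjw.2,
          show z'.2/2 + 1/2 - (w'.2/2 + 1/2) = (z'.2 - w'.2)/2 by ring, abs_div, abs_two]
      rw [habs, pow_succ]
      linarith
  intro z w hz hw hz0 hw0
  have h2 : z.2 - w.2 = 0 := abs_le_all (fun n => key n z w hz hw hz0 hw0)
  exact Prod.ext (hz0.trans hw0.symm) (by linarith)

end slices


section triple
variable {F : Set (ℝ × ℝ)}

set_option maxHeartbeats 2000000 in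
lemma digitBoundary {t : ℝ} {i j k : Fin 4} (hij : i ≠ j)
    (hi1 : A i ≤ t) (hi2 : t ≤ A i + 1/4) (hj1 : A j ≤ t) (hj2 : t ≤ A j + 1/4)
    (hk1 : A k ≤ t) (hk2 : t ≤ A k + 1/4) :
    4*(t - A k) = 0 ∨ 4*(t - A k) = 1 := by
  rcases ABcases i with ⟨hi, hAi, -⟩ | ⟨hi, hAi, -⟩ | ⟨hi, hAi, -⟩ | ⟨hi, hAi, -⟩ <;>
  rcases ABcases j with ⟨hj, hAj, -⟩ | ⟨hj, hAj, -⟩ | ⟨hj, hAj, -⟩ | ⟨hj, hAj, -⟩ <;>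
  rcases ABcases k with ⟨hk, hAk, -⟩ | ⟨hk, hAk, -⟩ | ⟨hk, hAk, -⟩ | ⟨hk, hAk, -⟩ <;>
  rw [hAi] at hi1 hi2 <;> rw [hAj] at hj1 hj2 <;> rw [hAk] at hk1 hk2 ⊢ <;>
  first
    | exact absurd (hi.trans hj.symm) hij
    | (left; linarith)
    | (right; linarith)
    | (exfalso; linarith)

set_option maxHeartbeats 2000000 in
lemma noThreeDigits {t : ℝ} {i j k : Fin 4} (hij : i ≠ j) (hik : i ≠ k) (hjk : j ≠ k)
    (hi1 : A i ≤ t) (hi2 : t ≤ A i + 1/4) (hj1 : A j ≤ t) (hj2 : t ≤ A j + 1/4)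
    (hk1 : A k ≤ t) (hk2 : t ≤ A k + 1/4) : False := by
  rcases ABcases i with ⟨hi, hAi, -⟩ | ⟨hi, hAi, -⟩ | ⟨hi, hAi, -⟩ | ⟨hi, hAi, -⟩ <;>
  rcases ABcases j with ⟨hj, hAj, -⟩ | ⟨hj, hAj, -⟩ | ⟨hj, hAj, -⟩ | ⟨hj, hAj, -⟩ <;>
  rcases ABcases k with ⟨hk, hAk, -⟩ | ⟨hk, hAk, -⟩ | ⟨hk, hAk, -⟩ | ⟨hk, hAk, -⟩ <;>
  rw [hAi] at hi1 hi2 <;> rw [hAj] at hj1 hj2 <;> rw [hAk] at hk1 hk2 <;>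
  first
    | exact absurd (hi.trans hj.symm) hij
    | exact absurd (hi.trans hk.symm) hik
    | exact absurd (hj.trans hk.symm) hjk
    | linarith

lemma samePoint (hFsub : F ⊆ Icc 0 1 ×ˢ Icc 0 1)
    (hFinv : F = ⋃ i : Fin 4, selfAffineMap i '' F) {t : ℝ} {i : Fin 4}
    {zp zq wp wq : ℝ × ℝ}
    (hwp : wp ∈ F) (hwq : wq ∈ F)
    (hep : zp = selfAffineMap i wp) (heq : zq = selfAffineMap i wq)
    (hxp : zp.1 = t) (hxq : zq.1 = t)
    (hb : 4*(t - A i) = 0 ∨ 4*(t - A i) = 1) : zp = zq := by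
  have h1 : wp.1 = 4*(t - A i) := by
    have e : t = wp.1/4 + A i := by rw [← hxp, hep, sa_fst]
    linarith
  have h2 : wq.1 = 4*(t - A i) := by
    have e : t = wq.1/4 + A i := by rw [← hxq, heq, sa_fst]
    linarith
  rcases hb with hb | hb
  · have hw : wp = wq := sliceZero hFsub hFinv wp wq hwp hwq (by rw [h1, hb]) (by rw [h2, hb])
    rw [hep, heq, hw]
  · have hw : wp = wq := sliceOne hFsub hFinv wp wq hwp hwq (by rw [h1, hb]) (by rw [h2, hb])
    rw [hep, heq, hw]

lemma tripleBound (hFsub : F ⊆ Icc 0 1 ×ˢ Icc 0 1)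
    (hFinv : F = ⋃ i : Fin 4, selfAffineMap i '' F) :
    ∀ n : ℕ, ∀ z1 z2 z3 : ℝ × ℝ, z1 ∈ F → z2 ∈ F → z3 ∈ F →
      z1.1 = z2.1 → z2.1 = z3.1 → z1.2 < z2.2 → z2.2 < z3.2 →
      z3.2 - z1.2 ≤ (1/2:ℝ)^n := by
  intro n
  induction n with
  | zero =>
    intro z1 z2 z3 h1 h2 h3 _ _ _ _
    obtain ⟨-, ha, hb⟩ := hFsub h1
    obtain ⟨-, hc, hd⟩ := hFsub h3
    rw [pow_zero]
    linarith
  | succ n IH =>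
    intro z1 z2 z3 h1 h2 h3 e12 e23 l12 l23
    obtain ⟨i1, w1, hw1, he1⟩ := digit_of_mem hFinv h1
    obtain ⟨i2, w2, hw2, he2⟩ := digit_of_mem hFinv h2
    obtain ⟨i3, w3, hw3, he3⟩ := digit_of_mem hFinv h3
    obtain ⟨⟨hw1a, hw1b⟩, -⟩ := hFsub hw1
    obtain ⟨⟨hw2a, hw2b⟩, -⟩ := hFsub hw2
    obtain ⟨⟨hw3a, hw3b⟩, -⟩ := hFsub hw3
    have hf1 : z1.1 = w1.1/4 + A i1 := by rw [he1, sa_fst]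
    have hf2 : z2.1 = w2.1/4 + A i2 := by rw [he2, sa_fst]
    have hf3 : z3.1 = w3.1/4 + A i3 := by rw [he3, sa_fst]
    have hs1 : z1.2 = w1.2/2 + B i1 := by rw [he1, sa_snd]
    have hs2 : z2.2 = w2.2/2 + B i2 := by rw [he2, sa_snd]
    have hs3 : z3.2 = w3.2/2 + B i3 := by rw [he3, sa_snd]
    have hi1a : A i1 ≤ z1.1 := by linarith
    have hi1b : z1.1 ≤ A i1 + 1/4 := by linarith
    have hi2a : A i2 ≤ z1.1 := by rw [e12]; linarith
    have hi2b : z1.1 ≤ A i2 + 1/4 := by rw [e12]; linarith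
    have hi3a : A i3 ≤ z1.1 := by rw [e12, e23]; linarith
    have hi3b : z1.1 ≤ A i3 + 1/4 := by rw [e12, e23]; linarith
    by_cases h12 : i1 = i2
    · by_cases h23 : i2 = i3
      · -- all digits equal
        subst h12; subst h23
        have hx12 : w1.1 = w2.1 := by
          have : z1.1 = z2.1 := e12
          linarith [hf1, hf2]
        have hx23 : w2.1 = w3.1 := by linarith [hf2, hf3, e23]
        have hB12 : B i1 = B i1 := rfl
        have hy12 : w1.2 < w2.2 := by linarith
        have hy23 : w2.2 < w3.2 := by linarith
        have hIH := IH w1 w2 w3 hw1 hw2 hw3 hx12 hx23 hy12 hy23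
        rw [pow_succ]
        linarith
      · -- i2 ≠ i3 : boundary, and z1 z2 share digit i1 = i2
        exfalso
        have hb := digitBoundary (t := z1.1) h23 hi2a hi2b hi3a hi3b hi1a hi1b
        have := samePoint hFsub hFinv hw1 hw2 he1 (h12 ▸ he2) rfl e12.symm hb
        rw [this] at l12
        exact lt_irrefl _ l12
    · -- i1 ≠ i2 : boundary
      exfalso
      have hbk : ∀ k : Fin 4, A k ≤ z1.1 → z1.1 ≤ A k + 1/4 →
          4*(z1.1 - A k) = 0 ∨ 4*(z1.1 - A k) = 1 :=
        fun k hk1 hk2 => digitBoundary h12 hi1a hi1b hi2a hi2b hk1 hk2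
      by_cases h13 : i1 = i3
      · have := samePoint hFsub hFinv hw1 hw3 he1 (h13 ▸ he3) rfl
          (e23.symm.trans e12.symm) (hbk i1 hi1a hi1b)
        rw [this] at l12
        linarith
      · by_cases h23 : i2 = i3
        · have := samePoint hFsub hFinv hw2 hw3 he2 (h23 ▸ he3) e12.symm
            (e23.symm.trans e12.symm) (hbk i2 hi2a hi2b)
          rw [this] at l23
          linarith
        · exact noThreeDigits h12 h13 h23 hi1a hi1b hi2a hi2b hi3a hi3b

end triple


section final
variable {F : Set (ℝ × ℝ)}

lemma noThreePoints (hFsub : F ⊆ Icc 0 1 ×ˢ Icc 0 1)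
    (hFinv : F = ⋃ i : Fin 4, selfAffineMap i '' F)
    (z1 z2 z3 : ℝ × ℝ) (h1 : z1 ∈ F) (h2 : z2 ∈ F) (h3 : z3 ∈ F)
    (e12 : z1.1 = z2.1) (e23 : z2.1 = z3.1) (l12 : z1.2 < z2.2) (l23 : z2.2 < z3.2) :
    False := by
  have hpos : 0 < z3.2 - z1.2 := by linarith
  obtain ⟨n, hn⟩ := exists_pow_lt_of_lt_one hpos (show (1/2:ℝ) < 1 by norm_num)
  exact absurd (tripleBound hFsub hFinv n z1 z2 z3 h1 h2 h3 e12 e23 l12 l23) (not_le.2 hn)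

lemma strict3 {y1 y2 y3 : ℝ} (d12 : y1 ≠ y2) (d13 : y1 ≠ y3) (d23 : y2 ≠ y3)
    (P : ℝ → Prop) (h1 : P y1) (h2 : P y2) (h3 : P y3) :
    ∃ a b c, P a ∧ P b ∧ P c ∧ a < b ∧ b < c := by
  rcases lt_trichotomy y1 y2 with a | a | a
  · rcases lt_trichotomy y2 y3 with b | b | b
    · exact ⟨y1, y2, y3, h1, h2, h3, a, b⟩
    · exact absurd b d23
    · rcases lt_trichotomy y1 y3 with c | c | c
      · exact ⟨y1, y3, y2, h1, h3, h2, c, b⟩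
      · exact absurd c d13
      · exact ⟨y3, y1, y2, h3, h1, h2, c, a⟩
  · exact absurd a d12
  · rcases lt_trichotomy y1 y3 with b | b | b
    · exact ⟨y2, y1, y3, h2, h1, h3, a, b⟩
    · exact absurd b d13
    · rcases lt_trichotomy y2 y3 with c | c | c
      · exact ⟨y2, y3, y1, h2, h3, h1, c, b⟩
      · exact absurd c d23
      · exact ⟨y3, y2, y1, h3, h2, h1, c, a⟩

lemma pairLemma (hFsub : F ⊆ Icc 0 1 ×ˢ Icc 0 1)
    (hFinv : F = ⋃ i : Fin 4, selfAffineMap i '' F) (t : ℝ) :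
    ∃ p q : ℝ × ℝ, {z ∈ F | z.1 = t} ⊆ {p, q} := by
  have hno3 : ∀ u v w : ℝ × ℝ, u ∈ {z ∈ F | z.1 = t} → v ∈ {z ∈ F | z.1 = t} →
      w ∈ {z ∈ F | z.1 = t} → u ≠ v → u ≠ w → v ≠ w → False := by
    intro u v w hu hv hw huv huw hvw
    have exy : ∀ a b : ℝ × ℝ, a ∈ {z ∈ F | z.1 = t} → b ∈ {z ∈ F | z.1 = t} →
        a.2 = b.2 → a = b := fun a b ha hb he => Prod.ext (ha.2.trans hb.2.symm) he
    have d12 : u.2 ≠ v.2 := fun he => huv (exy u v hu hv he)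
    have d13 : u.2 ≠ w.2 := fun he => huw (exy u w hu hw he)
    have d23 : v.2 ≠ w.2 := fun he => hvw (exy v w hv hw he)
    have hmem : ∀ a : ℝ × ℝ, a ∈ {z ∈ F | z.1 = t} → ((t, a.2) : ℝ × ℝ) ∈ F := by
      intro a ha
      rw [show ((t, a.2) : ℝ × ℝ) = a from Prod.ext ha.2.symm rfl]
      exact ha.1
    obtain ⟨a, b, c, hPa, hPb, hPc, hab, hbc⟩ :=
      strict3 d12 d13 d23 (fun y => ((t, y) : ℝ × ℝ) ∈ F) (hmem u hu) (hmem v hv) (hmem w hw)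
    exact noThreePoints hFsub hFinv (t, a) (t, b) (t, c) hPa hPb hPc rfl rfl hab hbc
  by_cases h2 : ∃ p q : ℝ × ℝ, p ∈ {z ∈ F | z.1 = t} ∧ q ∈ {z ∈ F | z.1 = t} ∧ p ≠ q
  · obtain ⟨p, q, hp, hq, hpq⟩ := h2
    refine ⟨p, q, fun r hr => ?_⟩
    by_contra hrpq
    simp only [mem_insert_iff, mem_singleton_iff] at hrpq
    push_neg at hrpq
    exact hno3 p q r hp hq hr hpq (Ne.symm hrpq.1) (Ne.symm hrpq.2)
  · push_neg at h2
    rcases Set.eq_empty_or_nonempty {z ∈ F | z.1 = t} with he | ⟨z, hz⟩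
    · exact ⟨0, 0, by rw [he]; exact empty_subset _⟩
    · exact ⟨z, z, fun r hr => Or.inl (h2 r z hr hz)⟩

end final
end SelfAffineAux

open SelfAffineAux in
/-- The self-affine counterexample: the attractor `F` of the above IFS satisfies
(1) its natural measure `μ` obeys `μ(Q) ≤ C diam(Q)^{3/2}` for all squares `Q`, whence
`H^{3/2}(F) > 0`; (2) the projection of `F` to the `x`-axis is `[0,1]`; (3) every vertical
line meets `F` in at most two points, so every vertical slice has Hausdorff dimension `0`. -/
theorem self_affine_counterexample
    (F : Set (ℝ × ℝ)) (hFc : IsCompact F) (hFne : F.Nonempty)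
    (hFsub : F ⊆ Icc 0 1 ×ˢ Icc 0 1)
    (hFinv : F = ⋃ i : Fin 4, selfAffineMap i '' F)
    (μ : Measure (ℝ × ℝ)) [IsProbabilityMeasure μ]
    (hμF : μ Fᶜ = 0)
    (hμself : μ = (4 : ℝ≥0∞)⁻¹ • ∑ i : Fin 4, Measure.map (selfAffineMap i) μ) :
    (∃ C : ℝ, 0 < C ∧ ∀ x y h : ℝ, 0 ≤ h →
        (μ (Icc x (x + h) ×ˢ Icc y (y + h))).toReal ≤ C * (Real.sqrt 2 * h) ^ (3/2 : ℝ)) ∧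
    0 < μH[(3/2 : ℝ)] F ∧
    Prod.fst '' F = Icc (0 : ℝ) 1 ∧
    ∀ t : ℝ, (∃ p q : ℝ × ℝ, {z ∈ F | z.1 = t} ⊆ {p, q}) ∧
      dimH {z ∈ F | z.1 = t} = 0 := by
  refine ⟨⟨32, by norm_num, fun x y h h0 => ?_⟩,
    hausdorffPos hμF hFsub hμself hFc, projF hFc hFne hFsub hFinv, fun t => ?_⟩
  · have hb := mainBound hμF hFsub hμself x y h h0
    have htoReal : (μ (Icc x (x+h) ×ˢ Icc y (y+h))).toReal ≤ 32 * h ^ (3/2:ℝ) := by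
      have hm := ENNReal.toReal_mono ENNReal.ofReal_ne_top hb
      rwa [ENNReal.toReal_ofReal
        (mul_nonneg (by norm_num) (Real.rpow_nonneg h0 _))] at hm
    refine htoReal.trans ?_
    have hs : (1:ℝ) ≤ Real.sqrt 2 := by
      rw [show (1:ℝ) = Real.sqrt 1 by rw [Real.sqrt_one]]
      exact Real.sqrt_le_sqrt (by norm_num)
    have hr : h ^ (3/2:ℝ) ≤ (Real.sqrt 2 * h) ^ (3/2:ℝ) :=
      Real.rpow_le_rpow h0 (by nlinarith) (by norm_num)
    linarith
  · obtain ⟨p, q, hpq⟩ := pairLemma hFsub hFinv t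
    refine ⟨⟨p, q, hpq⟩, le_antisymm ?_ (zero_le)⟩
    calc dimH {z ∈ F | z.1 = t} ≤ dimH ({p, q} : Set (ℝ × ℝ)) := dimH_mono hpq
      _ = 0 := Set.Finite.dimH_zero (by simp)
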